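/- Let g₁ : W₁ → ℝ and g₂ : W₂ → ℝ be strictly positive Morse functions on smooth manifolds, and for q > 1 define f_q : W₁ × W₂ → ℝ by f_q(x, y) = (g₁(x)^q + g₂(y)^q)^{1/q}. Then the critical points of f_q are exactly the pairs (x, y) with x a critical point of g₁ and y a critical point of g₂, i.e. Crit(f_q) = Crit(g₁) × Crit(g₂). -/

import Mathlib

open scoped Manifold


private lemma aux_key {E₁ : Type*} [NormedAddCommGroup E₁] [NormedSpace ℝ E₁]
    {E₂ : Type*} [NormedAddCommGroup E₂] [NormedSpace ℝ E₂]
    (D₁ : E₁ →L[ℝ] ℝ) (D₂ : E₂ →L[ℝ] ℝ) {c₁ c₂ d : ℝ}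
    (hc₁ : c₁ ≠ 0) (hc₂ : c₂ ≠ 0) (hd : d ≠ 0) :
    ((1 : ℝ →L[ℝ] ℝ).smulRight d).comp
        ((((1 : ℝ →L[ℝ] ℝ).smulRight c₁).comp
            (D₁.comp (ContinuousLinearMap.fst ℝ E₁ E₂))) +
          (((1 : ℝ →L[ℝ] ℝ).smulRight c₂).comp
            (D₂.comp (ContinuousLinearMap.snd ℝ E₁ E₂)))) = 0
      ↔ D₁ = 0 ∧ D₂ = 0 := by
  constructor
  · intro hT
    constructor
    · ext v
      have h := ContinuousLinearMap.ext_iff.1 hT (v, 0)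
      simp only [ContinuousLinearMap.comp_apply, ContinuousLinearMap.add_apply,
        ContinuousLinearMap.smulRight_apply, ContinuousLinearMap.one_apply,
        ContinuousLinearMap.coe_fst', ContinuousLinearMap.coe_snd', map_zero,
        ContinuousLinearMap.zero_apply, smul_eq_mul, mul_zero, zero_mul, add_zero,
        one_mul] at h
      have h' : D₁ v * (c₁ * d) = 0 := by ring_nf; ring_nf at h; linarith
      simpa using (mul_eq_zero.1 h').resolve_right (mul_ne_zero hc₁ hd)
    · ext v
      have h := ContinuousLinearMap.ext_iff.1 hT (0, v)
      simp only [ContinuousLinearMap.comp_apply, ContinuousLinearMap.add_apply,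
        ContinuousLinearMap.smulRight_apply, ContinuousLinearMap.one_apply,
        ContinuousLinearMap.coe_fst', ContinuousLinearMap.coe_snd', map_zero,
        ContinuousLinearMap.zero_apply, smul_eq_mul, mul_zero, zero_mul, zero_add,
        one_mul] at h
      have h' : D₂ v * (c₂ * d) = 0 := by ring_nf; ring_nf at h; linarith
      simpa using (mul_eq_zero.1 h').resolve_right (mul_ne_zero hc₂ hd)
  · rintro ⟨h₁, h₂⟩
    rw [h₁, h₂]
    simp only [ContinuousLinearMap.zero_comp, ContinuousLinearMap.comp_zero,
      add_zero, zero_add]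

/-- for strictly positive smooth functions `g₁ : W₁ → ℝ`, `g₂ : W₂ → ℝ` on
smooth manifolds and `q > 1`, the critical points of
`f_q(x,y) = (g₁(x)^q + g₂(y)^q)^{1/q}` on `W₁ × W₂` are exactly the pairs of critical
points: `Crit(f_q) = Crit(g₁) × Crit(g₂)`.  (The hypothesis that the `gᵢ` are Morse is
not needed for this equality.) -/
theorem stmt_1
    {E₁ : Type*} [NormedAddCommGroup E₁] [NormedSpace ℝ E₁]
    {E₂ : Type*} [NormedAddCommGroup E₂] [NormedSpace ℝ E₂]
    {W₁ : Type*} [TopologicalSpace W₁] [ChartedSpace E₁ W₁]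
    [IsManifold (𝓘(ℝ, E₁)) ((⊤ : ℕ∞) : WithTop ℕ∞) W₁]
    {W₂ : Type*} [TopologicalSpace W₂] [ChartedSpace E₂ W₂]
    [IsManifold (𝓘(ℝ, E₂)) ((⊤ : ℕ∞) : WithTop ℕ∞) W₂]
    (g₁ : W₁ → ℝ) (g₂ : W₂ → ℝ)
    (hg₁ : ContMDiff (𝓘(ℝ, E₁)) (𝓘(ℝ, ℝ)) (⊤ : ℕ∞) g₁)
    (hg₂ : ContMDiff (𝓘(ℝ, E₂)) (𝓘(ℝ, ℝ)) (⊤ : ℕ∞) g₂)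
    (hg₁pos : ∀ x, 0 < g₁ x) (hg₂pos : ∀ y, 0 < g₂ y)
    (q : ℝ) (hq : 1 < q) :
    {p : W₁ × W₂ |
        mfderiv ((𝓘(ℝ, E₁)).prod (𝓘(ℝ, E₂))) (𝓘(ℝ, ℝ))
          (fun p : W₁ × W₂ => ((g₁ p.1) ^ q + (g₂ p.2) ^ q) ^ (1/q)) p = 0}
      = {p : W₁ × W₂ |
          mfderiv (𝓘(ℝ, E₁)) (𝓘(ℝ, ℝ)) g₁ p.1 = 0 ∧
          mfderiv (𝓘(ℝ, E₂)) (𝓘(ℝ, ℝ)) g₂ p.2 = 0} := by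
  ext ⟨x, y⟩
  simp only [Set.mem_setOf_eq]
  have hx := (hg₁.mdifferentiable (by simp) x).hasMFDerivAt
  have hy := (hg₂.mdifferentiable (by simp) y).hasMFDerivAt
  set D₁ := mfderiv (𝓘(ℝ, E₁)) (𝓘(ℝ, ℝ)) g₁ x with hD₁
  set D₂ := mfderiv (𝓘(ℝ, E₂)) (𝓘(ℝ, ℝ)) g₂ y with hD₂
  set c₁ : ℝ := q * g₁ x ^ (q - 1) with hc₁
  set c₂ : ℝ := q * g₂ y ^ (q - 1) with hc₂
  have hq0 : (0:ℝ) < q := lt_trans one_pos hq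
  have hc₁pos : 0 < c₁ := mul_pos hq0 (Real.rpow_pos_of_pos (hg₁pos x) _)
  have hc₂pos : 0 < c₂ := mul_pos hq0 (Real.rpow_pos_of_pos (hg₂pos y) _)
  have hupos : 0 < g₁ x ^ q + g₂ y ^ q :=
    add_pos (Real.rpow_pos_of_pos (hg₁pos x) _) (Real.rpow_pos_of_pos (hg₂pos y) _)
  set d : ℝ := (1/q) * (g₁ x ^ q + g₂ y ^ q) ^ (1/q - 1) with hd
  have hdpos : 0 < d := mul_pos (by positivity) (Real.rpow_pos_of_pos hupos _)
  have h1 : HasMFDerivAt ((𝓘(ℝ, E₁)).prod (𝓘(ℝ, E₂))) (𝓘(ℝ, ℝ))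
      (fun p : W₁ × W₂ => g₁ p.1 ^ q) (x, y)
      (((1 : ℝ →L[ℝ] ℝ).smulRight c₁).comp
        (D₁.comp (ContinuousLinearMap.fst ℝ E₁ E₂))) := by
    have hr : HasDerivAt (fun t : ℝ => t ^ q) c₁ (g₁ x) :=
      Real.hasDerivAt_rpow_const (Or.inl (hg₁pos x).ne')
    exact HasMFDerivAt.comp (x, y) hr.hasFDerivAt.hasMFDerivAt
      (HasMFDerivAt.comp (x, y) hx (hasMFDerivAt_fst (I := 𝓘(ℝ, E₁)) (I' := 𝓘(ℝ, E₂)) (x := (x, y))))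
  have h2 : HasMFDerivAt ((𝓘(ℝ, E₁)).prod (𝓘(ℝ, E₂))) (𝓘(ℝ, ℝ))
      (fun p : W₁ × W₂ => g₂ p.2 ^ q) (x, y)
      (((1 : ℝ →L[ℝ] ℝ).smulRight c₂).comp
        (D₂.comp (ContinuousLinearMap.snd ℝ E₁ E₂))) := by
    have hr : HasDerivAt (fun t : ℝ => t ^ q) c₂ (g₂ y) :=
      Real.hasDerivAt_rpow_const (Or.inl (hg₂pos y).ne')
    exact HasMFDerivAt.comp (x, y) hr.hasFDerivAt.hasMFDerivAt
      (HasMFDerivAt.comp (x, y) hy (hasMFDerivAt_snd (I := 𝓘(ℝ, E₁)) (I' := 𝓘(ℝ, E₂)) (x := (x, y))))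
  have hu := h1.add h2
  have hr2 : HasDerivAt (fun t : ℝ => t ^ (1/q)) d (g₁ x ^ q + g₂ y ^ q) :=
    Real.hasDerivAt_rpow_const (Or.inl hupos.ne')
  have hf : HasMFDerivAt ((𝓘(ℝ, E₁)).prod (𝓘(ℝ, E₂))) (𝓘(ℝ, ℝ))
      (fun p : W₁ × W₂ => ((g₁ p.1) ^ q + (g₂ p.2) ^ q) ^ (1/q)) (x, y)
      (((1 : ℝ →L[ℝ] ℝ).smulRight d).comp
        ((((1 : ℝ →L[ℝ] ℝ).smulRight c₁).comp
            (D₁.comp (ContinuousLinearMap.fst ℝ E₁ E₂))) +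
          (((1 : ℝ →L[ℝ] ℝ).smulRight c₂).comp
            (D₂.comp (ContinuousLinearMap.snd ℝ E₁ E₂))))) :=
    HasMFDerivAt.comp (x, y) hr2.hasFDerivAt.hasMFDerivAt hu
  rw [hf.mfderiv]
  exact aux_key (E₁ := E₁) (E₂ := E₂) D₁ D₂ hc₁pos.ne' hc₂pos.ne' hdpos.ne'
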